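/- Let ξ_k, k ≥ 1, be independent real-valued random variables such that E[ξ_k] = 0 and E[ξ_k²] > 0 for every k, suppose there exist a real number c > 0 and a real number α ≥ −1 such that lim_{k→∞} k^{−α} E[ξ_k²] = c, and suppose in addition there is a constant c₁ > 0, independent of k, such that E[ξ_k⁴] ≤ c₁ (E[ξ_k²])² for all k ≥ 1. Then, with probability one, lim_{N→∞} (Σ_{k=1}^N ξ_k²) / (Σ_{k=1}^N E[ξ_k²]) = 1. -/

import Mathlib

open MeasureTheory ProbabilityTheory Filter


-- eventual two-sided bounds on v
lemma aux_bounds (v : ℕ → ℝ) (c α : ℝ) (hc : 0 < c)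
    (hlim : Tendsto (fun k : ℕ => (k:ℝ)^(-α) * v k) atTop (nhds c)) :
    ∃ K₀ : ℕ, 1 ≤ K₀ ∧ ∀ k, K₀ ≤ k →
      c/2 * (k:ℝ)^α ≤ v k ∧ v k ≤ 2*c*(k:ℝ)^α := by
  have h := Metric.tendsto_atTop.1 hlim (c/2) (by linarith)
  obtain ⟨K, hK⟩ := h
  refine ⟨max K 1, le_max_right _ _, fun k hk => ?_⟩
  have hk1 : 1 ≤ k := le_trans (le_max_right _ _) hk
  have hkK : K ≤ k := le_trans (le_max_left _ _) hk
  have hd := hK k hkK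
  rw [Real.dist_eq, abs_lt] at hd
  have hkpos : (0:ℝ) < (k:ℝ) := by exact_mod_cast hk1
  have hrp : (0:ℝ) < (k:ℝ)^α := Real.rpow_pos_of_pos hkpos α
  have hneg : (k:ℝ)^(-α) = ((k:ℝ)^α)⁻¹ := Real.rpow_neg hkpos.le α
  rw [hneg] at hd
  constructor
  · have h1 : c/2 < ((k:ℝ)^α)⁻¹ * v k := by linarith [hd.1]
    calc c/2 * (k:ℝ)^α ≤ (((k:ℝ)^α)⁻¹ * v k) * (k:ℝ)^α :=
          mul_le_mul_of_nonneg_right h1.le hrp.le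
      _ = v k := by field_simp
  · have h1 : ((k:ℝ)^α)⁻¹ * v k < 2*c := by linarith [hd.2]
    calc v k = (((k:ℝ)^α)⁻¹ * v k) * (k:ℝ)^α := by field_simp
      _ ≤ 2*c*(k:ℝ)^α := mul_le_mul_of_nonneg_right h1.le hrp.le


lemma aux_window (v : ℕ → ℝ) (c α : ℝ) (hc : 0 < c)
    (hpos : ∀ k, 1 ≤ k → 0 < v k)
    (K₀ : ℕ) (hK₀ : 1 ≤ K₀)
    (hlow : ∀ k, K₀ ≤ k → c/2 * (k:ℝ)^α ≤ v k) :
    ∃ c₆ : ℝ, 0 < c₆ ∧ ∀ k, 2*K₀+2 ≤ k →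
      c₆ * (k:ℝ) * (k:ℝ)^α ≤ ∑ j ∈ Finset.Icc 1 (k-1), v j := by
  set m₀ : ℝ := min ((4:ℝ)^(-α)) 1 with hm₀
  have hm₀pos : 0 < m₀ := lt_min (Real.rpow_pos_of_pos (by norm_num) _) one_pos
  refine ⟨c * m₀ / 4, by positivity, fun k hk => ?_⟩
  set m : ℕ := k / 2 with hm
  have hmK : K₀ ≤ m := by omega
  have hm1 : 1 ≤ m := by omega
  have hmk : m ≤ k - 1 := by omega
  have hk4 : (k:ℝ) / 4 ≤ (m:ℝ) := by
    have : k ≤ 4 * m := by omega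
    have := (Nat.cast_le (α := ℝ)).2 this
    push_cast at this
    linarith
  have hkpos : (0:ℝ) < k := by
    have : 1 ≤ k := by omega
    exact_mod_cast Nat.lt_of_lt_of_le Nat.zero_lt_one this
  -- pointwise lower bound on the window
  have hpt : ∀ j ∈ Finset.Icc m (k-1), c/2 * (m₀ * (k:ℝ)^α) ≤ v j := by
    intro j hj
    rw [Finset.mem_Icc] at hj
    have hjm : (m:ℝ) ≤ (j:ℝ) := by exact_mod_cast hj.1
    have hjk : (j:ℝ) ≤ (k:ℝ) := by
      have : j ≤ k := le_trans hj.2 (Nat.sub_le _ _)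
      exact_mod_cast this
    have hjpos : (0:ℝ) < (j:ℝ) := by
      have : 1 ≤ j := le_trans hm1 hj.1
      exact_mod_cast this
    have hkey : m₀ * (k:ℝ)^α ≤ (j:ℝ)^α := by
      rcases le_or_gt 0 α with hα0 | hα0
      · have h1 : ((k:ℝ)/4)^α ≤ (j:ℝ)^α :=
          Real.rpow_le_rpow (by positivity) (le_trans hk4 hjm) hα0
        have h2 : ((k:ℝ)/4)^α = (k:ℝ)^α * ((4:ℝ)^α)⁻¹ := by
          rw [Real.div_rpow hkpos.le (by norm_num)]; ring
        have h3 : m₀ ≤ ((4:ℝ)^α)⁻¹ := by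
          rw [← Real.rpow_neg (by norm_num)]
          exact min_le_left _ _
        calc m₀ * (k:ℝ)^α ≤ ((4:ℝ)^α)⁻¹ * (k:ℝ)^α :=
              mul_le_mul_of_nonneg_right h3 (Real.rpow_pos_of_pos hkpos α).le
          _ = ((k:ℝ)/4)^α := by rw [h2]; ring
          _ ≤ (j:ℝ)^α := h1
      · have h1 : (k:ℝ)^α ≤ (j:ℝ)^α :=
          Real.rpow_le_rpow_of_nonpos hjpos hjk hα0.le
        calc m₀ * (k:ℝ)^α ≤ 1 * (k:ℝ)^α :=
              mul_le_mul_of_nonneg_right (min_le_right _ _)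
                (Real.rpow_pos_of_pos hkpos α).le
          _ ≤ (j:ℝ)^α := by rw [one_mul]; exact h1
    calc c/2 * (m₀ * (k:ℝ)^α) ≤ c/2 * (j:ℝ)^α := by
          apply mul_le_mul_of_nonneg_left hkey (by positivity)
      _ ≤ v j := hlow j (le_trans hmK hj.1)
  have hsum1 : ∑ j ∈ Finset.Icc m (k-1), (c/2 * (m₀ * (k:ℝ)^α)) ≤
      ∑ j ∈ Finset.Icc m (k-1), v j := Finset.sum_le_sum hpt
  have hsub : ∑ j ∈ Finset.Icc m (k-1), v j ≤ ∑ j ∈ Finset.Icc 1 (k-1), v j := by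
    apply Finset.sum_le_sum_of_subset_of_nonneg
    · apply Finset.Icc_subset_Icc_left hm1
    · intro i hi _
      rw [Finset.mem_Icc] at hi
      exact (hpos i hi.1).le
  have hcard : ∑ j ∈ Finset.Icc m (k-1), (c/2 * (m₀ * (k:ℝ)^α)) =
      ((k - m : ℕ) : ℝ) * (c/2 * (m₀ * (k:ℝ)^α)) := by
    rw [Finset.sum_const, Nat.card_Icc]
    have : k - 1 + 1 - m = k - m := by omega
    rw [this, nsmul_eq_mul]
  have hhalf : (k:ℝ)/2 ≤ ((k - m : ℕ) : ℝ) := by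
    have : k ≤ 2 * (k - m) := by omega
    have := (Nat.cast_le (α := ℝ)).2 this
    push_cast at this
    linarith
  have hconst : (0:ℝ) ≤ c/2 * (m₀ * (k:ℝ)^α) := by
    have := Real.rpow_pos_of_pos hkpos α
    positivity
  calc c * m₀ / 4 * (k:ℝ) * (k:ℝ)^α = (k:ℝ)/2 * (c/2 * (m₀ * (k:ℝ)^α)) := by ring
    _ ≤ ((k - m : ℕ) : ℝ) * (c/2 * (m₀ * (k:ℝ)^α)) :=
        mul_le_mul_of_nonneg_right hhalf hconst
    _ ≤ ∑ j ∈ Finset.Icc 1 (k-1), v j := by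
        rw [← hcard]; exact le_trans hsum1 hsub


lemma aux_upper (v : ℕ → ℝ) (c α : ℝ) (hc : 0 < c)
    (hpos : ∀ k, 1 ≤ k → 0 < v k)
    (K₀ : ℕ) (hK₀ : 1 ≤ K₀)
    (hup : ∀ k, K₀ ≤ k → v k ≤ 2*c*(k:ℝ)^α) :
    ∃ M : ℝ, 0 < M ∧ (∀ k, 1 ≤ k → v k ≤ M + 2*c*(k:ℝ)^α) ∧
      (∀ N : ℕ, ∑ k ∈ Finset.Icc 1 N, v k ≤ (M + 2*c) * ((N:ℝ) * (1 + (N:ℝ)^α))) := by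
  set M : ℝ := ∑ j ∈ Finset.Icc 1 K₀, v j with hM
  have hMpos : 0 < M := by
    apply Finset.sum_pos
    · intro i hi; rw [Finset.mem_Icc] at hi; exact hpos i hi.1
    · exact ⟨K₀, Finset.mem_Icc.2 ⟨hK₀, le_refl _⟩⟩
  have hvk : ∀ k, 1 ≤ k → v k ≤ M + 2*c*(k:ℝ)^α := by
    intro k hk
    have hkpos : (0:ℝ) < (k:ℝ) := by exact_mod_cast hk
    have hrp : (0:ℝ) < (k:ℝ)^α := Real.rpow_pos_of_pos hkpos α
    rcases le_or_gt k K₀ with h | h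
    · have : v k ≤ M := by
        apply Finset.single_le_sum (f := v) (fun i hi => ?_)
          (Finset.mem_Icc.2 ⟨hk, h⟩)
        rw [Finset.mem_Icc] at hi; exact (hpos i hi.1).le
      nlinarith
    · have := hup k h.le
      nlinarith
  refine ⟨M, hMpos, hvk, fun N => ?_⟩
  rcases Nat.eq_zero_or_pos N with rfl | hN
  · simp
  have hNpos : (0:ℝ) < (N:ℝ) := by exact_mod_cast hN
  have hNrp : (0:ℝ) < (N:ℝ)^α := Real.rpow_pos_of_pos hNpos α
  have hpt : ∀ k ∈ Finset.Icc 1 N, v k ≤ (M + 2*c) * (1 + (N:ℝ)^α) := by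
    intro k hk
    rw [Finset.mem_Icc] at hk
    have hkpos : (0:ℝ) < (k:ℝ) := by exact_mod_cast hk.1
    have h1 : (k:ℝ)^α ≤ 1 + (N:ℝ)^α := by
      rcases le_or_gt 0 α with hα0 | hα0
      · have : (k:ℝ)^α ≤ (N:ℝ)^α :=
          Real.rpow_le_rpow hkpos.le (by exact_mod_cast hk.2) hα0
        linarith
      · have h2 : (k:ℝ)^α ≤ 1 :=
          Real.rpow_le_one_of_one_le_of_nonpos (by exact_mod_cast hk.1) hα0.le
        linarith
    have := hvk k hk.1
    have hkrp : (0:ℝ) < (k:ℝ)^α := Real.rpow_pos_of_pos hkpos α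
    nlinarith
  calc ∑ k ∈ Finset.Icc 1 N, v k ≤
      ∑ k ∈ Finset.Icc 1 N, (M + 2*c) * (1 + (N:ℝ)^α) := Finset.sum_le_sum hpt
    _ = (N:ℝ) * ((M + 2*c) * (1 + (N:ℝ)^α)) := by
        rw [Finset.sum_const, Nat.card_Icc, nsmul_eq_mul, Nat.add_sub_cancel]
    _ = (M + 2*c) * ((N:ℝ) * (1 + (N:ℝ)^α)) := by ring

lemma aux_Btop (v : ℕ → ℝ) (c α : ℝ) (hc : 0 < c) (hα : -1 ≤ α)
    (hpos : ∀ k, 1 ≤ k → 0 < v k)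
    (K₀ : ℕ) (hK₀ : 1 ≤ K₀)
    (hlow : ∀ k, K₀ ≤ k → c/2 * (k:ℝ)^α ≤ v k) :
    Tendsto (fun N => ∑ k ∈ Finset.Icc 1 N, v k) atTop atTop := by
  have hHtop : Tendsto (fun N : ℕ => ∑ j ∈ Finset.Icc 1 N, ((j:ℝ))⁻¹) atTop atTop := by
    have h0 := Real.tendsto_sum_range_one_div_nat_succ_atTop
    apply h0.congr
    intro n
    have : Finset.Icc 1 n = Finset.Ico 1 (n+1) := by
      rw [Finset.Ico_add_one_right_eq_Icc]
    rw [this, Finset.sum_Ico_eq_sum_range]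
    simp only [Nat.add_sub_cancel]
    apply Finset.sum_congr rfl
    intro i _
    push_cast
    rw [one_div, add_comm]
  have hlow2 : ∀ N, K₀ ≤ N →
      c/2 * ((∑ j ∈ Finset.Icc 1 N, ((j:ℝ))⁻¹) - ∑ j ∈ Finset.Icc 1 (K₀-1), ((j:ℝ))⁻¹)
        ≤ ∑ k ∈ Finset.Icc 1 N, v k := by
    intro N hN
    have hsplit : (∑ j ∈ Finset.Icc 1 (K₀-1), ((j:ℝ))⁻¹) + ∑ j ∈ Finset.Icc K₀ N, ((j:ℝ))⁻¹
        = ∑ j ∈ Finset.Icc 1 N, ((j:ℝ))⁻¹ := by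
      have e1 : Finset.Icc 1 (K₀ - 1) = Finset.Ioc 0 (K₀ - 1) := by
        rw [← Finset.Icc_add_one_left_eq_Ioc]
        rfl
      have e2 : Finset.Icc K₀ N = Finset.Ioc (K₀ - 1) N := by
        rw [← Finset.Icc_add_one_left_eq_Ioc]
        congr 1
        omega
      have e3 : Finset.Icc 1 N = Finset.Ioc 0 N := by
        rw [← Finset.Icc_add_one_left_eq_Ioc]
        rfl
      rw [e1, e2, e3]
      exact Finset.sum_Ioc_consecutive _ (by omega) (by omega)
    have h1 : ∑ j ∈ Finset.Icc K₀ N, (c/2) * ((j:ℝ))⁻¹ ≤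
        ∑ j ∈ Finset.Icc K₀ N, v j := by
      apply Finset.sum_le_sum
      intro j hj
      rw [Finset.mem_Icc] at hj
      have hj1 : (1:ℝ) ≤ (j:ℝ) := by
        have : 1 ≤ j := le_trans hK₀ hj.1
        exact_mod_cast this
      have hrp : ((j:ℝ))^(-1:ℝ) ≤ (j:ℝ)^α :=
        Real.rpow_le_rpow_of_exponent_le hj1 hα
      rw [Real.rpow_neg_one] at hrp
      calc (c/2) * ((j:ℝ))⁻¹ ≤ c/2 * (j:ℝ)^α := by
            apply mul_le_mul_of_nonneg_left hrp (by positivity)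
        _ ≤ v j := hlow j hj.1
    have h2 : ∑ j ∈ Finset.Icc K₀ N, v j ≤ ∑ k ∈ Finset.Icc 1 N, v k := by
      apply Finset.sum_le_sum_of_subset_of_nonneg
      · exact Finset.Icc_subset_Icc_left hK₀
      · intro i hi _
        rw [Finset.mem_Icc] at hi
        exact (hpos i hi.1).le
    calc c/2 * ((∑ j ∈ Finset.Icc 1 N, ((j:ℝ))⁻¹) - ∑ j ∈ Finset.Icc 1 (K₀-1), ((j:ℝ))⁻¹)
        = ∑ j ∈ Finset.Icc K₀ N, (c/2) * ((j:ℝ))⁻¹ := by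
          rw [← Finset.mul_sum]
          congr 1
          linarith [hsplit]
      _ ≤ ∑ k ∈ Finset.Icc 1 N, v k := le_trans h1 h2
  have hg : Tendsto (fun N : ℕ => c/2 * ((∑ j ∈ Finset.Icc 1 N, ((j:ℝ))⁻¹)
      - ∑ j ∈ Finset.Icc 1 (K₀-1), ((j:ℝ))⁻¹)) atTop atTop := by
    apply Tendsto.const_mul_atTop (by positivity)
    exact tendsto_atTop_add_const_right _ _ hHtop
  refine tendsto_atTop_mono' atTop ?_ hg
  filter_upwards [eventually_ge_atTop K₀] with N hN using hlow2 N hN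

set_option maxHeartbeats 1000000 in
lemma aux_det (v : ℕ → ℝ) (c α : ℝ) (hc : 0 < c) (hα : -1 ≤ α)
    (hpos : ∀ k, 1 ≤ k → 0 < v k)
    (hlim : Tendsto (fun k : ℕ => (k:ℝ)^(-α) * v k) atTop (nhds c)) :
    ∃ Nj : ℕ → ℕ, 1 ≤ Nj 1 ∧ Monotone Nj ∧ Tendsto Nj atTop atTop ∧
      Tendsto (fun j => (∑ k ∈ Finset.Icc 1 (Nj (j+1)), v k) /
        (∑ k ∈ Finset.Icc 1 (Nj j), v k)) atTop (nhds 1) ∧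
      Summable (fun j => (∑ k ∈ Finset.Icc 1 (Nj j), (v k)^2) /
        (∑ k ∈ Finset.Icc 1 (Nj j), v k)^2) := by
  obtain ⟨K₀, hK₀, hbd⟩ := aux_bounds v c α hc hlim
  have hlow : ∀ k, K₀ ≤ k → c/2 * (k:ℝ)^α ≤ v k := fun k hk => (hbd k hk).1
  have hup : ∀ k, K₀ ≤ k → v k ≤ 2*c*(k:ℝ)^α := fun k hk => (hbd k hk).2
  obtain ⟨c₆, hc₆, hwin⟩ := aux_window v c α hc hpos K₀ hK₀ hlow
  obtain ⟨M, hM, hv_ub, hB_ub⟩ := aux_upper v c α hc hpos K₀ hK₀ hup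
  have hBtop := aux_Btop v c α hc hα hpos K₀ hK₀ hlow
  set B : ℕ → ℝ := fun N => ∑ k ∈ Finset.Icc 1 N, v k with hBdef
  set T : ℕ → ℝ := fun N => ∑ k ∈ Finset.Icc 1 N, (v k)^2 with hTdef
  have hBmono : Monotone B := by
    intro a b hab
    apply Finset.sum_le_sum_of_subset_of_nonneg (Finset.Icc_subset_Icc_right hab)
    intro i hi _
    rw [Finset.mem_Icc] at hi
    exact (hpos i hi.1).le
  have hBpos : ∀ n, 1 ≤ n → 0 < B n := by
    intro n hn
    apply Finset.sum_pos
    · intro i hi; rw [Finset.mem_Icc] at hi; exact hpos i hi.1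
    · exact ⟨1, Finset.mem_Icc.2 ⟨le_refl _, hn⟩⟩
  have hTnonneg : ∀ n, 0 ≤ T n := fun n => Finset.sum_nonneg fun i _ => sq_nonneg _
  set p : ℝ := α + 3 with hpdef
  have hp2 : 2 ≤ p := by linarith
  have hp1 : 1 < p := by linarith
  have hp0 : 0 < p := by linarith
  set t : ℕ → ℝ := fun j => (j:ℝ)^p with htdef
  have ht_mono : Monotone t := by
    intro a b hab
    exact Real.rpow_le_rpow (Nat.cast_nonneg a) (by exact_mod_cast hab) hp0.le
  have ht_pos : ∀ j, 1 ≤ j → 0 < t j := by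
    intro j hj
    exact Real.rpow_pos_of_pos (by exact_mod_cast hj) p
  have httop : Tendsto t atTop atTop :=
    (tendsto_rpow_atTop hp0).comp tendsto_natCast_atTop_atTop
  have hex : ∀ j, ∃ n, t j ≤ B n := fun j =>
    (hBtop.eventually (eventually_ge_atTop (t j))).exists
  set Nj : ℕ → ℕ := fun j => Nat.find (hex j) with hNjdef
  have hspec : ∀ j, t j ≤ B (Nj j) := fun j => Nat.find_spec (hex j)
  have hmin : ∀ j n, n < Nj j → B n < t j := fun j n h =>
    lt_of_not_ge (Nat.find_min (hex j) h)
  have hNmono : Monotone Nj := by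
    intro a b hab
    exact Nat.find_mono fun n hn => le_trans (ht_mono hab) hn
  have hNj1 : 1 ≤ Nj 1 := by
    by_contra h
    push_neg at h
    interval_cases h' : Nj 1
    · have := hspec 1
      rw [h'] at this
      have hB0 : B 0 = 0 := by
        simp only [hBdef]
        rw [Finset.Icc_eq_empty (by omega), Finset.sum_empty]
      have ht1 : t 1 = 1 := by simp [htdef]
      rw [hB0, ht1] at this
      linarith
  have hNge1 : ∀ j, 1 ≤ j → 1 ≤ Nj j := fun j hj => le_trans hNj1 (hNmono hj)
  have hBNpos : ∀ j, 1 ≤ j → 0 < B (Nj j) := fun j hj =>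
    lt_of_lt_of_le (ht_pos j hj) (hspec j)
  have hNtop : Tendsto Nj atTop atTop := by
    rw [tendsto_atTop_atTop]
    intro m
    obtain ⟨j₀, hj₀⟩ := (httop.eventually (eventually_gt_atTop (B m))).exists
    refine ⟨j₀, fun j hj => ?_⟩
    by_contra h
    push_neg at h
    have h1 : B (Nj j) ≤ B m := hBmono (by omega)
    have h2 : t j₀ ≤ t j := ht_mono hj
    linarith [hspec j]
  -- key constant for v k ≤ C/k * B (k-1)
  set C : ℝ := 2*c/c₆ with hCdef
  have hC : 0 < C := by positivity
  have hvC : ∀ k, 2*K₀+2 ≤ k → (k:ℝ) * v k ≤ C * B (k-1) := by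
    intro k hk
    have h1 := hwin k hk
    have h2 := hup k (by omega)
    have hkpos : (0:ℝ) < (k:ℝ) := by
      have : 1 ≤ k := by omega
      exact_mod_cast this
    have hrp : (0:ℝ) < (k:ℝ)^α := Real.rpow_pos_of_pos hkpos α
    have : (k:ℝ) * v k ≤ 2*c*((k:ℝ) * (k:ℝ)^α) := by nlinarith
    calc (k:ℝ) * v k ≤ 2*c*((k:ℝ) * (k:ℝ)^α) := this
      _ = C * (c₆ * (k:ℝ) * (k:ℝ)^α) := by
          field_simp [hCdef]
          rw [hCdef, div_mul_cancel₀ _ hc₆.ne']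
      _ ≤ C * B (k-1) := mul_le_mul_of_nonneg_left h1 hC.le
  -- decomposition B n = B (n-1) + v n
  have hBsucc : ∀ n, 1 ≤ n → B n = B (n-1) + v n := by
    intro n hn
    have hn' : n - 1 + 1 = n := by omega
    simp only [hBdef]
    conv_lhs => rw [← hn']
    rw [Finset.sum_Icc_succ_top (by omega), hn']
  have hdec : ∀ j, B (Nj (j+1)) ≤ t (j+1) + v (Nj (j+1)) := by
    intro j
    have hn1 : 1 ≤ Nj (j+1) := hNge1 (j+1) (by omega)
    have h1 := hBsucc (Nj (j+1)) hn1
    have h2 : B (Nj (j+1) - 1) < t (j+1) := hmin (j+1) _ (by omega)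
    linarith
  -- ratio tends to 1
  have hratio : Tendsto (fun j => B (Nj (j+1)) / B (Nj j)) atTop (nhds 1) := by
    have hpart1 : Tendsto (fun j : ℕ => t (j+1) / t j) atTop (nhds 1) := by
      have hbase : Tendsto (fun j : ℕ => ((j:ℝ)+1)/(j:ℝ)) atTop (nhds 1) := by
        have h := tendsto_one_div_atTop_nhds_zero_nat (𝕜 := ℝ)
        have h2 : Tendsto (fun j : ℕ => 1 + 1/(j:ℝ)) atTop (nhds 1) := by
          simpa using tendsto_const_nhds.add h
        apply h2.congr'
        filter_upwards [eventually_ge_atTop 1] with j hj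
        have hjpos : (0:ℝ) < (j:ℝ) := by exact_mod_cast hj
        field_simp
      have h3 : Tendsto (fun j : ℕ => (((j:ℝ)+1)/(j:ℝ))^p) atTop (nhds 1) := by
        have := hbase.rpow_const (Or.inr hp0.le)
        simpa using this
      apply h3.congr'
      filter_upwards [eventually_ge_atTop 1] with j hj
      have hjpos : (0:ℝ) < (j:ℝ) := by exact_mod_cast hj
      simp only [htdef]
      rw [Real.div_rpow (by positivity) hjpos.le]
      push_cast
      ring_nf
    have hpart2 : Tendsto (fun j : ℕ => v (Nj (j+1)) / t j) atTop (nhds 0) := by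
      have hw0 : Tendsto (fun j : ℕ => (C * 2^p) / (Nj (j+1) : ℝ)) atTop (nhds 0) := by
        have h1 : Tendsto (fun n : ℕ => (C * 2^p) / (n:ℝ)) atTop (nhds 0) :=
          tendsto_const_div_atTop_nhds_zero_nat _
        exact h1.comp (hNtop.comp (tendsto_add_atTop_nat 1))
      apply tendsto_of_tendsto_of_tendsto_of_le_of_le' tendsto_const_nhds hw0
      · filter_upwards [eventually_ge_atTop 1] with j hj
        have hn1 : 1 ≤ Nj (j+1) := hNge1 (j+1) (by omega)
        exact div_nonneg (hpos _ hn1).le (ht_pos j hj).le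
      · have hev : ∀ᶠ j : ℕ in atTop, 2*K₀+2 ≤ Nj (j+1) :=
          (hNtop.comp (tendsto_add_atTop_nat 1)).eventually (eventually_ge_atTop (2*K₀+2))
        filter_upwards [eventually_ge_atTop 1, hev] with j hj hnj
        set n := Nj (j+1) with hndef
        have hnpos : (0:ℝ) < (n:ℝ) := by
          have : 1 ≤ n := by omega
          exact_mod_cast this
        have htj : 0 < t j := ht_pos j hj
        have htj1 : 0 < t (j+1) := ht_pos (j+1) (by omega)
        have h1 : (n:ℝ) * v n ≤ C * B (n-1) := hvC n hnj
        have h2 : B (n-1) < t (j+1) := hmin (j+1) (n-1) (by omega)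
        have h3 : t (j+1) ≤ 2^p * t j := by
          simp only [htdef]
          push_cast
          calc ((j:ℝ)+1)^p ≤ (2*(j:ℝ))^p := by
                apply Real.rpow_le_rpow (by positivity) ?_ hp0.le
                have : (1:ℝ) ≤ (j:ℝ) := by exact_mod_cast hj
                linarith
            _ = 2^p * (j:ℝ)^p := by
                rw [Real.mul_rpow (by norm_num) (Nat.cast_nonneg j)]
        have h4 : v n ≤ C * t (j+1) / (n:ℝ) := by
          rw [le_div_iff₀ hnpos]
          nlinarith
        calc v n / t j ≤ (C * t (j+1) / (n:ℝ)) / t j :=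
              div_le_div₀ (div_nonneg (mul_nonneg hC.le htj1.le) hnpos.le) h4 htj le_rfl
          _ ≤ (C * (2^p * t j) / (n:ℝ)) / t j := by
              gcongr
          _ = C * 2^p / (n:ℝ) := by
              field_simp
    have hq : Tendsto (fun j : ℕ => (t (j+1) + v (Nj (j+1))) / t j) atTop (nhds 1) := by
      have := hpart1.add hpart2
      rw [add_zero] at this
      apply this.congr'
      filter_upwards [] with j
      rw [add_div]
    apply tendsto_of_tendsto_of_tendsto_of_le_of_le' tendsto_const_nhds hq
    · filter_upwards [eventually_ge_atTop 1] with j hj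
      rw [le_div_iff₀ (hBNpos j hj)]
      rw [one_mul]
      exact hBmono (hNmono (by omega))
    · filter_upwards [eventually_ge_atTop 1] with j hj
      apply div_le_div₀ ?_ (hdec j) (ht_pos j hj) (hspec j)
      have hn1 : 1 ≤ Nj (j+1) := hNge1 (j+1) (by omega)
      have := ht_pos (j+1) (by omega)
      have := hpos _ hn1
      linarith
  refine ⟨Nj, hNj1, hNmono, hNtop, hratio, ?_⟩
  have hterm_nonneg : ∀ j, 0 ≤ T (Nj j) / (B (Nj j))^2 :=
    fun j => div_nonneg (hTnonneg _) (sq_nonneg _)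
  rcases le_or_gt α 0 with hα0 | hα0
  · -- bounded variance case
    have hvM : ∀ k, 1 ≤ k → v k ≤ M + 2*c := by
      intro k hk
      have h1 := hv_ub k hk
      have h2 : (k:ℝ)^α ≤ 1 :=
        Real.rpow_le_one_of_one_le_of_nonpos (by exact_mod_cast hk) hα0
      nlinarith
    have hT : ∀ N : ℕ, T N ≤ (M + 2*c) * B N := by
      intro N
      simp only [hTdef, hBdef]
      rw [Finset.mul_sum]
      apply Finset.sum_le_sum
      intro k hk
      rw [Finset.mem_Icc] at hk
      have h1 := hvM k hk.1
      have h2 := (hpos k hk.1).le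
      nlinarith
    have hbound : ∀ j, 1 ≤ j →
        T (Nj j) / (B (Nj j))^2 ≤ (M + 2*c) * (((j:ℕ):ℝ)^p)⁻¹ := by
      intro j hj
      have hBj := hBNpos j hj
      have htj := ht_pos j hj
      calc T (Nj j) / (B (Nj j))^2 ≤ ((M + 2*c) * B (Nj j)) / (B (Nj j))^2 :=
            div_le_div₀ (mul_nonneg (by linarith) hBj.le) (hT _) (by positivity) le_rfl
        _ = (M + 2*c) / B (Nj j) := by
            field_simp
        _ ≤ (M + 2*c) / t j :=
            div_le_div₀ (by linarith) le_rfl htj (hspec j)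
        _ = (M + 2*c) * (((j:ℕ):ℝ)^p)⁻¹ := by
            rw [div_eq_mul_inv]
    rw [← summable_nat_add_iff 1]
    apply Summable.of_nonneg_of_le (fun j => hterm_nonneg (j+1))
      (fun j => hbound (j+1) (by omega))
    exact (summable_nat_add_iff
        (f := fun j : ℕ => (M + 2*c) * (((j:ℕ):ℝ)^p)⁻¹) 1).2
      (((Real.summable_nat_rpow_inv).2 hp1).mul_left (M + 2*c))
  · -- growing variance case
    set q : ℝ := p / (α+1) with hqdef
    have hα1 : (0:ℝ) < α + 1 := by linarith
    have hq1 : 1 < q := by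
      rw [hqdef, lt_div_iff₀ hα1]
      linarith
    set A : ℝ := 2*(M + 2*c) with hAdef
    have hA : 0 < A := by positivity
    set s : ℝ := 1/(α+1) with hsdef
    have hs : 0 < s := by positivity
    set C₉ : ℝ := (M + 2*c) / c₆ * A^s with hC9
    have hC₉pos : 0 < C₉ := by
      have := Real.rpow_pos_of_pos hA s
      positivity
    have hone_le_rpow : ∀ N : ℕ, 1 ≤ N → (1:ℝ) ≤ (N:ℝ)^α := by
      intro N hN
      calc (1:ℝ) = (1:ℝ)^α := (Real.one_rpow α).symm
        _ ≤ (N:ℝ)^α := Real.rpow_le_rpow zero_le_one (by exact_mod_cast hN) hα0.le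
    have hBA : ∀ N : ℕ, 1 ≤ N → B N ≤ A * (N:ℝ)^(α+1) := by
      intro N hN
      have hNpos : (0:ℝ) < (N:ℝ) := by exact_mod_cast hN
      have hNα := hone_le_rpow N hN
      have h1 := hB_ub N
      have h2 : (N:ℝ)^(α+1) = (N:ℝ)^α * (N:ℝ) := by
        rw [Real.rpow_add hNpos, Real.rpow_one]
      have h3 : (0:ℝ) < (N:ℝ)^α := Real.rpow_pos_of_pos hNpos α
      rw [hAdef, h2]
      nlinarith [mul_nonneg (mul_nonneg (show (0:ℝ) ≤ M+2*c by linarith) hNpos.le)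
        (sub_nonneg.2 hNα)]
    have hT : ∀ N : ℕ, 1 ≤ N → T N ≤ (M + 2*c) * (N:ℝ)^α * B N := by
      intro N hN
      have hNpos : (0:ℝ) < (N:ℝ) := by exact_mod_cast hN
      have hNα := hone_le_rpow N hN
      simp only [hTdef, hBdef]
      rw [Finset.mul_sum]
      apply Finset.sum_le_sum
      intro k hk
      rw [Finset.mem_Icc] at hk
      have hkpos : (0:ℝ) < (k:ℝ) := by exact_mod_cast hk.1
      have h1 := hv_ub k hk.1
      have h2 : (k:ℝ)^α ≤ (N:ℝ)^α :=
        Real.rpow_le_rpow hkpos.le (by exact_mod_cast hk.2) hα0.le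
      have h3 := (hpos k hk.1).le
      have h4 : v k ≤ (M + 2*c) * (N:ℝ)^α := by nlinarith
      nlinarith
    have hBlow : ∀ N : ℕ, 2*K₀+1 ≤ N → c₆ * (N:ℝ) * (N:ℝ)^α ≤ B N := by
      intro N hN
      have h1 := hwin (N+1) (by omega)
      have e : N + 1 - 1 = N := by omega
      rw [e] at h1
      have hNpos : (0:ℝ) < (N:ℝ) := by
        have : 1 ≤ N := by omega
        exact_mod_cast this
      have h2 : (N:ℝ) ≤ ((N+1:ℕ):ℝ) := by push_cast; linarith
      have h3 : (N:ℝ)^α ≤ ((N+1:ℕ):ℝ)^α :=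
        Real.rpow_le_rpow hNpos.le h2 hα0.le
      have h4 : (0:ℝ) < (N:ℝ)^α := Real.rpow_pos_of_pos hNpos α
      have h5 : (0:ℝ) < ((N+1:ℕ):ℝ) := by positivity
      calc c₆ * (N:ℝ) * (N:ℝ)^α ≤ c₆ * ((N+1:ℕ):ℝ) * ((N+1:ℕ):ℝ)^α := by
            apply mul_le_mul (by nlinarith) h3 h4.le (by positivity)
        _ ≤ B N := h1
    have hbound : ∀ j, 1 ≤ j → 2*K₀+1 ≤ Nj j →
        T (Nj j)/(B (Nj j))^2 ≤ C₉ * (((j:ℕ):ℝ)^q)⁻¹ := by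
      intro j hj hNjK
      have hN1 : 1 ≤ Nj j := by omega
      have hNpos : (0:ℝ) < ((Nj j:ℕ):ℝ) := by exact_mod_cast hN1
      have hNα : (0:ℝ) < ((Nj j:ℕ):ℝ)^α := Real.rpow_pos_of_pos hNpos α
      have hBj := hBNpos j hj
      have htj := ht_pos j hj
      have hjpos : (0:ℝ) < (j:ℝ) := by exact_mod_cast hj
      have hB1 := hBlow (Nj j) hNjK
      -- step 1 : term ≤ (M+2c)/(c₆ N)
      have step1 : T (Nj j)/(B (Nj j))^2 ≤ (M + 2*c) / (c₆ * ((Nj j:ℕ):ℝ)) := by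
        calc T (Nj j)/(B (Nj j))^2
            ≤ ((M + 2*c) * ((Nj j:ℕ):ℝ)^α * B (Nj j)) / (B (Nj j))^2 :=
              div_le_div₀ (mul_nonneg (mul_nonneg (by linarith) hNα.le) hBj.le)
                (hT _ hN1) (by positivity) le_rfl
          _ = ((M + 2*c) * ((Nj j:ℕ):ℝ)^α) / B (Nj j) := by
              field_simp
          _ ≤ ((M + 2*c) * ((Nj j:ℕ):ℝ)^α) / (c₆ * ((Nj j:ℕ):ℝ) * ((Nj j:ℕ):ℝ)^α) :=
              div_le_div₀ (mul_nonneg (by linarith) hNα.le) le_rfl (by positivity) hB1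
          _ = (M + 2*c) / (c₆ * ((Nj j:ℕ):ℝ)) := by
              field_simp
      -- step 2 : N ≥ (j^p/A)^s = j^q/A^s
      have step2 : (j:ℝ)^q / A^s ≤ ((Nj j:ℕ):ℝ) := by
        have h1 : (j:ℝ)^p ≤ A * ((Nj j:ℕ):ℝ)^(α+1) :=
          le_trans (hspec j) (hBA _ hN1)
        have h2 : (j:ℝ)^p / A ≤ ((Nj j:ℕ):ℝ)^(α+1) := by
          rw [div_le_iff₀ hA]
          linarith
        have h3 : ((j:ℝ)^p / A)^s ≤ (((Nj j:ℕ):ℝ)^(α+1))^s :=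
          Real.rpow_le_rpow (by positivity) h2 hs.le
        have h4 : (((Nj j:ℕ):ℝ)^(α+1))^s = ((Nj j:ℕ):ℝ) := by
          rw [← Real.rpow_mul hNpos.le]
          have : (α+1) * s = 1 := by
            rw [hsdef]
            field_simp
          rw [this, Real.rpow_one]
        have h5 : ((j:ℝ)^p / A)^s = (j:ℝ)^q / A^s := by
          rw [Real.div_rpow (by positivity) hA.le, ← Real.rpow_mul hjpos.le]
          congr 2
          rw [hqdef, hsdef]
          field_simp
        rw [← h5, ← h4]
        exact h3
      have hApow : (0:ℝ) < A^s := Real.rpow_pos_of_pos hA s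
      have hjq : (0:ℝ) < (j:ℝ)^q := Real.rpow_pos_of_pos hjpos q
      calc T (Nj j)/(B (Nj j))^2 ≤ (M + 2*c) / (c₆ * ((Nj j:ℕ):ℝ)) := step1
        _ ≤ (M + 2*c) / (c₆ * ((j:ℝ)^q / A^s)) :=
            div_le_div₀ (by linarith) le_rfl (by positivity)
              (mul_le_mul_of_nonneg_left step2 hc₆.le)
        _ = C₉ * (((j:ℕ):ℝ)^q)⁻¹ := by
            rw [hC9]
            field_simp
            try ring
    obtain ⟨J₀, hJ₀⟩ := eventually_atTop.1
      ((hNtop.eventually (eventually_ge_atTop (2*K₀+1))).and (eventually_ge_atTop 1))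
    rw [← summable_nat_add_iff J₀]
    apply Summable.of_nonneg_of_le (fun j => hterm_nonneg (j+J₀))
      (fun j => hbound (j+J₀) (hJ₀ (j+J₀) (by omega)).2 (hJ₀ (j+J₀) (by omega)).1)
    exact (summable_nat_add_iff
        (f := fun j : ℕ => C₉ * (((j:ℕ):ℝ)^q)⁻¹) J₀).2
      (((Real.summable_nat_rpow_inv).2 hq1).mul_left C₉)


lemma aux_sandwich (S B : ℕ → ℝ) (Nj : ℕ → ℕ)
    (hS0 : ∀ n, 0 ≤ S n) (hS : Monotone S) (hB : Monotone B)
    (hBpos : ∀ n, 1 ≤ n → 0 < B n)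
    (hN1 : 1 ≤ Nj 1) (hNmono : Monotone Nj) (hNtop : Tendsto Nj atTop atTop)
    (hratio : Tendsto (fun j => B (Nj (j + 1)) / B (Nj j)) atTop (nhds 1))
    (hconv : Tendsto (fun j => S (Nj j) / B (Nj j)) atTop (nhds 1)) :
    Tendsto (fun N => S N / B N) atTop (nhds 1) := by
  have hex : ∀ N : ℕ, ∃ j, N < Nj j := fun N =>
    (hNtop.eventually (eventually_gt_atTop N)).exists
  set jN : ℕ → ℕ := fun N => Nat.find (hex N) - 1 with hjN
  have hBNpos : ∀ j, 1 ≤ j → 0 < B (Nj j) := fun j hj =>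
    hBpos _ (le_trans hN1 (hNmono hj))
  -- facts for N ≥ Nj 1
  have hfind2 : ∀ N, Nj 1 ≤ N → 2 ≤ Nat.find (hex N) := by
    intro N hN
    have : 1 < Nat.find (hex N) := by
      rw [Nat.lt_find_iff]
      intro m hm hc
      exact absurd (lt_of_le_of_lt hN hc) (not_lt.2 (hNmono hm))
    omega
  have hsucc : ∀ N, Nj 1 ≤ N → jN N + 1 = Nat.find (hex N) := by
    intro N hN; have := hfind2 N hN; simp only [hjN]; omega
  have hj1 : ∀ N, Nj 1 ≤ N → 1 ≤ jN N := by
    intro N hN; have := hfind2 N hN; simp only [hjN]; omega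
  have hle : ∀ N, Nj 1 ≤ N → Nj (jN N) ≤ N := by
    intro N hN
    have h1 : jN N < Nat.find (hex N) := by rw [← hsucc N hN]; omega
    exact not_lt.1 (Nat.find_min (hex N) h1)
  have hlt : ∀ N, Nj 1 ≤ N → N < Nj (jN N + 1) := by
    intro N hN; rw [hsucc N hN]; exact Nat.find_spec (hex N)
  have hjtop : Tendsto jN atTop atTop := by
    rw [tendsto_atTop_atTop]
    intro J
    refine ⟨Nj (J + 1), fun N hN => ?_⟩
    have h2 : J + 1 ≤ Nat.find (hex N) := by
      have : J < Nat.find (hex N) := by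
        rw [Nat.lt_find_iff]
        intro m hm hc
        exact absurd (lt_of_le_of_lt hN hc)
          (not_lt.2 (hNmono (le_trans hm (Nat.le_succ J))))
      omega
    simp only [hjN]; omega
  -- upper and lower comparison functions
  set U : ℕ → ℝ := fun j => S (Nj (j + 1)) / B (Nj (j + 1)) * (B (Nj (j + 1)) / B (Nj j)) with hU
  set L : ℕ → ℝ := fun j => S (Nj j) / B (Nj j) * (B (Nj j) / B (Nj (j + 1))) with hL
  have hUt : Tendsto U atTop (nhds 1) := by
    have h1 : Tendsto (fun j => S (Nj (j + 1)) / B (Nj (j + 1))) atTop (nhds 1) :=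
      hconv.comp (tendsto_add_atTop_nat 1)
    simpa using h1.mul hratio
  have hLt : Tendsto L atTop (nhds 1) := by
    have h2 : Tendsto (fun j => (B (Nj (j + 1)) / B (Nj j))⁻¹) atTop (nhds 1) := by
      simpa using hratio.inv₀ one_ne_zero
    have h3 : Tendsto (fun j => B (Nj j) / B (Nj (j + 1))) atTop (nhds 1) := by
      refine h2.congr' ?_
      filter_upwards [eventually_ge_atTop 1] with j hj
      rw [inv_div]
    simpa using hconv.mul h3
  refine tendsto_of_tendsto_of_tendsto_of_le_of_le' (hLt.comp hjtop) (hUt.comp hjtop) ?_ ?_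
  · filter_upwards [eventually_ge_atTop (Nj 1)] with N hN
    have hj := hj1 N hN
    have hb1 : 0 < B (Nj (jN N)) := hBNpos _ hj
    have hb2 : 0 < B (Nj (jN N + 1)) := hBNpos _ (le_trans hj (Nat.le_succ _))
    have hBN : 0 < B N := hBpos _ (le_trans hN1 hN)
    have key : S (Nj (jN N)) / B (Nj (jN N + 1)) ≤ S N / B N := by
      apply div_le_div₀ (hS0 N) (hS (hle N hN)) hBN
      exact hB (le_of_lt (hlt N hN))
    calc (L ∘ jN) N = S (Nj (jN N)) / B (Nj (jN N + 1)) := by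
          simp only [hL, Function.comp_apply]
          field_simp
      _ ≤ S N / B N := key
  · filter_upwards [eventually_ge_atTop (Nj 1)] with N hN
    have hj := hj1 N hN
    have hb1 : 0 < B (Nj (jN N)) := hBNpos _ hj
    have hb2 : 0 < B (Nj (jN N + 1)) := hBNpos _ (le_trans hj (Nat.le_succ _))
    have hBN : 0 < B N := hBpos _ (le_trans hN1 hN)
    have key : S N / B N ≤ S (Nj (jN N + 1)) / B (Nj (jN N)) := by
      apply div_le_div₀ (hS0 _) (hS (le_of_lt (hlt N hN))) hb1
      exact hB (hle N hN)
    calc S N / B N ≤ S (Nj (jN N + 1)) / B (Nj (jN N)) := key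
      _ = (U ∘ jN) N := by
          simp only [hU, Function.comp_apply]
          field_simp

set_option maxHeartbeats 1000000 in
/-- Strong Law of Large Numbers (second part, Theorem A.1 of the paper):
if `ξ k`, `k ≥ 1`, are independent, centered random variables with positive
variances, `k^(-α) * E[ξ_k²] → c > 0` for some `α ≥ -1`, and moreover
`E[ξ_k⁴] ≤ c₁ (E[ξ_k²])²` for all `k` with `c₁ > 0` independent of `k`, then
almost surely `(∑_{k=1}^N ξ_k²) / (∑_{k=1}^N E[ξ_k²]) → 1`. -/
theorem slln_ratio_of_squares_tendsto_one
    {Ω : Type*} [MeasurableSpace Ω] (μ : Measure Ω) [IsProbabilityMeasure μ]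
    (ξ : ℕ → Ω → ℝ)
    (hmeas : ∀ k, Measurable (ξ k))
    (hindep : iIndepFun ξ μ)
    (hint : ∀ k, 1 ≤ k → Integrable (ξ k) μ)
    (hint2 : ∀ k, 1 ≤ k → Integrable (fun ω => (ξ k ω) ^ 2) μ)
    (hint4 : ∀ k, 1 ≤ k → Integrable (fun ω => (ξ k ω) ^ 4) μ)
    (hmean : ∀ k, 1 ≤ k → ∫ ω, ξ k ω ∂μ = 0)
    (hvarpos : ∀ k, 1 ≤ k → 0 < ∫ ω, (ξ k ω) ^ 2 ∂μ)
    (c α : ℝ) (hc : 0 < c) (hα : -1 ≤ α)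
    (hlim : Tendsto (fun k : ℕ => (k : ℝ) ^ (-α) * ∫ ω, (ξ k ω) ^ 2 ∂μ)
      atTop (nhds c))
    (c₁ : ℝ) (hc₁ : 0 < c₁)
    (hmom4 : ∀ k, 1 ≤ k →
      ∫ ω, (ξ k ω) ^ 4 ∂μ ≤ c₁ * (∫ ω, (ξ k ω) ^ 2 ∂μ) ^ 2) :
    ∀ᵐ ω ∂μ, Tendsto
      (fun N : ℕ => (∑ k ∈ Finset.Icc 1 N, (ξ k ω) ^ 2) /
        (∑ k ∈ Finset.Icc 1 N, ∫ ω', (ξ k ω') ^ 2 ∂μ))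
      atTop (nhds 1) := by
  set v : ℕ → ℝ := fun k => ∫ ω, (ξ k ω) ^ 2 ∂μ with hvdef
  set X : ℕ → Ω → ℝ := fun k ω => (ξ k ω) ^ 2 with hXdef
  set B : ℕ → ℝ := fun N => ∑ k ∈ Finset.Icc 1 N, v k with hBdef
  set T : ℕ → ℝ := fun N => ∑ k ∈ Finset.Icc 1 N, (v k)^2 with hTdef
  have hXmeas : ∀ k, Measurable (X k) := fun k => (hmeas k).pow_const 2
  have hXmem : ∀ k, 1 ≤ k → MemLp (X k) 2 μ := by
    intro k hk
    apply (memLp_two_iff_integrable_sq (hXmeas k).aestronglyMeasurable).2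
    have he : (fun ω => X k ω ^ 2) = fun ω => (ξ k ω) ^ 4 := by
      funext ω
      simp only [hXdef]
      ring
    rw [he]
    exact hint4 k hk
  have hpair : ∀ i j : ℕ, i ≠ j → IndepFun (X i) (X j) μ := by
    intro i j hij
    exact (hindep.indepFun hij).comp (measurable_id.pow_const 2)
      (measurable_id.pow_const 2)
  set SN : ℕ → Ω → ℝ := fun N => ∑ k ∈ Finset.Icc 1 N, X k with hSNdef
  have hSNapp : ∀ N ω, SN N ω = ∑ k ∈ Finset.Icc 1 N, (ξ k ω)^2 := by
    intro N ω
    simp only [hSNdef, Finset.sum_apply, hXdef]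
  have hSmem : ∀ N, MemLp (SN N) 2 μ := by
    intro N
    apply memLp_finset_sum'
    intro k hk
    exact hXmem k (Finset.mem_Icc.1 hk).1
  have hSmean : ∀ N, μ[SN N] = B N := by
    intro N
    have h1 : ∀ ω, SN N ω = ∑ k ∈ Finset.Icc 1 N, X k ω := fun ω => by
      simp only [hSNdef, Finset.sum_apply]
    calc μ[SN N] = ∫ ω, ∑ k ∈ Finset.Icc 1 N, X k ω ∂μ := by
          apply integral_congr_ae
          filter_upwards with ω using h1 ω
      _ = ∑ k ∈ Finset.Icc 1 N, ∫ ω, X k ω ∂μ := by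
          apply integral_finset_sum
          intro k hk
          exact hint2 k (Finset.mem_Icc.1 hk).1
      _ = B N := rfl
  have hvarX : ∀ k, 1 ≤ k → variance (X k) μ ≤ c₁ * (v k)^2 := by
    intro k hk
    have h1 : variance (X k) μ ≤ μ[(X k)^2] :=
      variance_le_expectation_sq (hXmeas k).aestronglyMeasurable
    have h2 : μ[(X k)^2] = ∫ ω, (ξ k ω)^4 ∂μ := by
      apply integral_congr_ae
      filter_upwards with ω
      simp only [hXdef, Pi.pow_apply]
      ring
    rw [h2] at h1
    exact le_trans h1 (hmom4 k hk)
  have hvarS : ∀ N, variance (SN N) μ ≤ c₁ * T N := by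
    intro N
    have h1 : variance (SN N) μ = ∑ k ∈ Finset.Icc 1 N, variance (X k) μ := by
      apply IndepFun.variance_sum
      · intro k hk
        exact hXmem k (Finset.mem_Icc.1 hk).1
      · intro i hi j hj hij
        exact hpair i j hij
    rw [h1, hTdef, Finset.mul_sum]
    apply Finset.sum_le_sum
    intro k hk
    exact hvarX k (Finset.mem_Icc.1 hk).1
  -- get the subsequence
  have hvpos : ∀ k, 1 ≤ k → 0 < v k := hvarpos
  obtain ⟨Nj, hNj1, hNmono, hNtop, hratio, hsum⟩ := aux_det v c α hc hα hvpos hlim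
  have hBmono : Monotone B := by
    intro a b hab
    apply Finset.sum_le_sum_of_subset_of_nonneg (Finset.Icc_subset_Icc_right hab)
    intro i hi _
    rw [Finset.mem_Icc] at hi
    exact (hvpos i hi.1).le
  have hBpos : ∀ n, 1 ≤ n → 0 < B n := by
    intro n hn
    apply Finset.sum_pos
    · intro i hi; rw [Finset.mem_Icc] at hi; exact hvpos i hi.1
    · exact ⟨1, Finset.mem_Icc.2 ⟨le_refl _, hn⟩⟩
  have hBNpos : ∀ j, 1 ≤ j → 0 < B (Nj j) := fun j hj =>
    hBpos _ (le_trans hNj1 (hNmono hj))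
  -- Chebyshev + Borel-Cantelli for each m
  have hBC : ∀ m : ℕ, ∀ᵐ ω ∂μ, ∀ᶠ j : ℕ in atTop,
      |SN (Nj (j+1)) ω - B (Nj (j+1))| < B (Nj (j+1)) / ((m:ℝ)+1) := by
    intro m
    set s : ℕ → Set Ω := fun j =>
      {ω | B (Nj (j+1)) / ((m:ℝ)+1) ≤ |SN (Nj (j+1)) ω - μ[SN (Nj (j+1))]|} with hsdef
    have hkey : ∀ j : ℕ, μ (s j) ≤
        ENNReal.ofReal ((c₁ * ((m:ℝ)+1)^2) * (T (Nj (j+1)) / (B (Nj (j+1)))^2)) := by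
      intro j
      have hj1 : (1:ℕ) ≤ j + 1 := by omega
      have hBj := hBNpos (j+1) hj1
      have hm1 : (0:ℝ) < (m:ℝ)+1 := by positivity
      have hcpos : 0 < B (Nj (j+1)) / ((m:ℝ)+1) := by positivity
      have h1 := meas_ge_le_variance_div_sq (hSmem (Nj (j+1))) hcpos
      apply le_trans h1
      apply ENNReal.ofReal_le_ofReal
      have hq : (B (Nj (j+1)) / ((m:ℝ)+1))^2 = (B (Nj (j+1)))^2 / ((m:ℝ)+1)^2 := by
        rw [div_pow]
      rw [hq, div_div_eq_mul_div]
      rw [div_le_iff₀ (by positivity)]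
      have h2 := hvarS (Nj (j+1))
      have hTnn : 0 ≤ T (Nj (j+1)) :=
        Finset.sum_nonneg fun i _ => sq_nonneg _
      have expand : c₁ * ((m:ℝ)+1)^2 * (T (Nj (j+1)) / (B (Nj (j+1)))^2) * (B (Nj (j+1)))^2
          = c₁ * T (Nj (j+1)) * ((m:ℝ)+1)^2 := by
        field_simp
      rw [expand]
      nlinarith [sq_nonneg ((m:ℝ)+1)]
    have hsum2 : Summable (fun j : ℕ =>
        (c₁ * ((m:ℝ)+1)^2) * (T (Nj (j+1)) / (B (Nj (j+1)))^2)) := by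
      apply Summable.mul_left
      exact ((summable_nat_add_iff 1).2 hsum)
    have hfin : (∑' j, μ (s j)) ≠ ⊤ := by
      apply ne_top_of_le_ne_top _ (ENNReal.tsum_le_tsum hkey)
      rw [← ENNReal.ofReal_tsum_of_nonneg]
      · exact ENNReal.ofReal_ne_top
      · intro j
        have hTnn : 0 ≤ T (Nj (j+1)) := Finset.sum_nonneg fun i _ => sq_nonneg _
        have : 0 ≤ T (Nj (j+1)) / (B (Nj (j+1)))^2 := div_nonneg hTnn (sq_nonneg _)
        positivity
      · exact hsum2
    have hae := ae_eventually_notMem hfin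
    filter_upwards [hae] with ω hω
    filter_upwards [hω] with j hj
    simp only [hsdef, Set.mem_setOf_eq, not_le] at hj
    rwa [hSmean] at hj
  have hBCall : ∀ᵐ ω ∂μ, ∀ m : ℕ, ∀ᶠ j : ℕ in atTop,
      |SN (Nj (j+1)) ω - B (Nj (j+1))| < B (Nj (j+1)) / ((m:ℝ)+1) :=
    ae_all_iff.2 hBC
  filter_upwards [hBCall] with ω hω
  -- convergence along the subsequence
  have hconv : Tendsto (fun j => SN (Nj j) ω / B (Nj j)) atTop (nhds 1) := by
    rw [Metric.tendsto_atTop]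
    intro ε hε
    obtain ⟨m, hm⟩ := exists_nat_one_div_lt hε
    obtain ⟨J, hJ⟩ := eventually_atTop.1 (hω m)
    refine ⟨J + 2, fun j hj => ?_⟩
    have hj1 : 1 ≤ j := by omega
    have hBj := hBNpos j hj1
    have hj' : j - 1 ≥ J := by omega
    have := hJ (j-1) hj'
    have hjj : j - 1 + 1 = j := by omega
    rw [hjj] at this
    rw [Real.dist_eq]
    have he : SN (Nj j) ω / B (Nj j) - 1 = (SN (Nj j) ω - B (Nj j)) / B (Nj j) := by
      field_simp
    rw [he, abs_div, abs_of_pos hBj]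
    calc |SN (Nj j) ω - B (Nj j)| / B (Nj j)
        < (B (Nj j) / ((m:ℝ)+1)) / B (Nj j) := by
          gcongr
      _ = 1 / ((m:ℝ)+1) := by
          field_simp
      _ < ε := hm
  -- sandwich
  have hfinal := aux_sandwich (fun N => ∑ k ∈ Finset.Icc 1 N, (ξ k ω)^2) B Nj
    (fun n => Finset.sum_nonneg fun i _ => sq_nonneg _)
    (by
      intro a b hab
      apply Finset.sum_le_sum_of_subset_of_nonneg (Finset.Icc_subset_Icc_right hab)
      intro i _ _
      exact sq_nonneg _)
    hBmono hBpos hNj1 hNmono hNtop hratio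
    (by
      apply hconv.congr
      intro j
      rw [hSNapp])
  exact hfinal
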